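/- Greedy point of the base polyhedron: let f be a nonnegative monotone submodular set function on subsets of a finite set Ω with |Ω| = n, and fix a bijection σ : {1,…,n} → Ω. Define x_{σ(k)} = f({σ(1),…,σ(k)}) − f({σ(1),…,σ(k−1)}) for 1 ≤ k ≤ n. Then ∑_{u∈S} x_u ≤ f(S) for every S ⊆ Ω. -/

import Mathlib

open Finset

/-- Greedy point of the base polyhedron: given a bijection `σ : Fin n ≃ Ω`, the greedy
solution `x (σ k) = f({σ 0, …, σ k}) - f({σ 0, …, σ (k-1)})` satisfies
`∑_{u ∈ S} x u ≤ f S` for every `S ⊆ Ω`. -/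
theorem stmt5 {Ω : Type*} [Fintype Ω] [DecidableEq Ω] (n : ℕ) (hn : Fintype.card Ω = n)
    (f : Finset Ω → ℝ)
    (hf_nonneg : ∀ S : Finset Ω, 0 ≤ f S)
    (hf_mono : ∀ A B : Finset Ω, A ⊆ B → f A ≤ f B)
    (hf_submod : ∀ A B : Finset Ω, f (A ∪ B) + f (A ∩ B) ≤ f A + f B)
    (σ : Fin n ≃ Ω) (x : Ω → ℝ)
    (hx : ∀ k : Fin n, x (σ k) =
      f ((Finset.univ.filter fun j : Fin n => j ≤ k).image σ) -
      f ((Finset.univ.filter fun j : Fin n => j < k).image σ)) :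
    ∀ S : Finset Ω, ∑ u ∈ S, x u ≤ f S := by
  suffices h : ∀ m : ℕ, m ≤ n → ∀ S : Finset Ω,
      S ⊆ (Finset.univ.filter fun j : Fin n => (j : ℕ) < m).image σ →
      ∑ u ∈ S, x u ≤ f S by
    intro S
    apply h n le_rfl
    intro u _
    simp only [mem_image, mem_filter, mem_univ, true_and]
    exact ⟨σ.symm u, (σ.symm u).isLt, by simp⟩
  intro m
  induction m with
  | zero =>
    intro _ S hS
    have : S = ∅ := by
      apply Finset.subset_empty.mp
      convert hS using 1
      simp
    simp [this, hf_nonneg]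
  | succ k ih =>
    intro hk S hS
    have hkn : k < n := hk
    set kk : Fin n := ⟨k, hkn⟩ with hkk
    set P : Finset Ω := (Finset.univ.filter fun j : Fin n => (j : ℕ) < k).image σ with hP
    set P' : Finset Ω := (Finset.univ.filter fun j : Fin n => (j : ℕ) < k + 1).image σ with hP'
    have hins : P' = insert (σ kk) P := by
      rw [hP', hP]
      have : (Finset.univ.filter fun j : Fin n => (j : ℕ) < k + 1)
          = insert kk (Finset.univ.filter fun j : Fin n => (j : ℕ) < k) := by
        ext j
        simp only [mem_filter, mem_univ, true_and, mem_insert]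
        constructor
        · intro hj
          rcases Nat.lt_succ_iff_lt_or_eq.mp hj with h | h
          · exact Or.inr h
          · exact Or.inl (Fin.ext h)
        · rintro (rfl | h)
          · simp [hkk]
          · omega
      rw [this, Finset.image_insert]
    have hknotP : σ kk ∉ P := by
      rw [hP]
      simp only [mem_image, mem_filter, mem_univ, true_and, not_exists, not_and]
      intro j hj hje
      have h2 := σ.injective hje
      rw [h2] at hj
      simp [hkk] at hj
    have hf1 : (Finset.univ.filter fun j : Fin n => j ≤ kk)
        = (Finset.univ.filter fun j : Fin n => (j : ℕ) < k + 1) := by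
      apply Finset.filter_congr
      intro j _
      simp only [Fin.le_def, hkk]
      omega
    have hf2 : (Finset.univ.filter fun j : Fin n => j < kk)
        = (Finset.univ.filter fun j : Fin n => (j : ℕ) < k) := by
      apply Finset.filter_congr
      intro j _
      simp only [Fin.lt_def, hkk]
    have hxkk : x (σ kk) = f P' - f P := by
      rw [hx kk, hf1, hf2, hP', hP]
    by_cases hmem : σ kk ∈ S
    · set S' : Finset Ω := S.erase (σ kk) with hS'
      have hS'P : S' ⊆ P := by
        intro u hu
        have hu1 : u ∈ S := Finset.mem_of_mem_erase hu
        have hu2 : u ≠ σ kk := Finset.ne_of_mem_erase hu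
        have := hS hu1
        rw [hins] at this
        rcases Finset.mem_insert.mp this with h | h
        · exact absurd h hu2
        · exact h
      have hsum : ∑ u ∈ S, x u = ∑ u ∈ S', x u + x (σ kk) :=
        (Finset.sum_erase_add S x hmem).symm
      have hunion : S ∪ P = P' := by
        apply Finset.Subset.antisymm
        · intro u hu
          rcases Finset.mem_union.mp hu with h | h
          · exact hS h
          · rw [hins]; exact Finset.mem_insert_of_mem h
        · rw [hins]
          intro u hu
          rcases Finset.mem_insert.mp hu with rfl | h
          · exact Finset.mem_union_left _ hmem
          · exact Finset.mem_union_right _ h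
      have hinter : S ∩ P = S' := by
        ext u
        simp only [Finset.mem_inter, hS', Finset.mem_erase]
        constructor
        · rintro ⟨h1, h2⟩
          refine ⟨fun h => hknotP (h ▸ h2), h1⟩
        · rintro ⟨h1, h2⟩
          refine ⟨h2, hS'P (Finset.mem_erase.mpr ⟨h1, h2⟩)⟩
      have hsub := hf_submod S P
      rw [hunion, hinter] at hsub
      have hih := ih (le_of_lt hk) S' hS'P
      rw [hsum, hxkk]
      linarith
    · apply ih (le_of_lt hk) S
      intro u hu
      have := hS hu
      rw [hins] at this
      rcases Finset.mem_insert.mp this with rfl | h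
      · exact absurd hu hmem
      · exact h
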